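/- Under the stated assumptions, for all sufficiently large N one has (1/N)·∑_{n≤N} ∑_{2≤m≤N−n+1} 1[g_n + g_{n+1} + ⋯ + g_{n+m−1} ∈ (1/2, 3/2 + ε)] ≤ 2√ε. (Here 1[·] is the indicator of the stated event.) -/

import Mathlib

open Finset Filter

lemma tele (lam : ℕ → ℝ) (a b : ℕ) (h : a ≤ b) :
    ∑ i ∈ Finset.Ico a b, (lam (i+1) - lam i) = lam b - lam a := by
  induction b with
  | zero => interval_cases a; simp
  | succ n ih =>
    rcases Nat.lt_or_ge a (n+1) with h' | h'
    · rw [Finset.sum_Ico_succ_top (by omega), ih (by omega)]; ring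
    · have : a = n + 1 := by omega
      subst this; simp

lemma gauss (j : ℕ) : ∑ v ∈ Finset.range j, (v : ℝ) = j * (j - 1) / 2 := by
  induction j with
  | zero => simp
  | succ n ih => rw [Finset.sum_range_succ, ih]; push_cast; ring

lemma helper_sum_min (k : ℕ) (B C : ℝ) (hB : 0 < B) (hC : 0 ≤ C) (hk : C < k * B) :
    ∑ v ∈ Finset.range k, min C ((v : ℝ) * B) ≤ k * C - C ^ 2 / (2 * B) := by
  set m := ⌊C / B⌋₊ with hm
  have hdiv : (0:ℝ) ≤ C / B := div_nonneg hC hB.le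
  have hmB : (m : ℝ) * B ≤ C := by
    have h := Nat.floor_le hdiv
    calc (m : ℝ) * B ≤ (C / B) * B := by nlinarith
      _ = C := div_mul_cancel₀ _ hB.ne'
  have hmB' : C < ((m : ℝ) + 1) * B := by
    have h := Nat.lt_floor_add_one (C / B)
    calc C = (C / B) * B := (div_mul_cancel₀ _ hB.ne').symm
      _ < ((m : ℝ) + 1) * B := by nlinarith
  have hmk : m + 1 ≤ k := by
    by_contra hcon
    push_neg at hcon
    have hkm : (k : ℝ) ≤ (m : ℝ) := by exact_mod_cast Nat.lt_succ_iff.mp hcon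
    nlinarith
  have step1 : ∑ v ∈ Finset.range k, min C ((v : ℝ) * B)
      = ∑ v ∈ Finset.range k, (C - max (C - (v : ℝ) * B) 0) := by
    refine Finset.sum_congr rfl fun v _ => ?_
    rcases le_total C ((v : ℝ) * B) with h | h
    · rw [min_eq_left h, max_eq_right (by linarith)]; ring
    · rw [min_eq_right h, max_eq_left (by linarith)]; ring
  have step2 : ∑ v ∈ Finset.range k, (C - max (C - (v : ℝ) * B) 0)
      = k * C - ∑ v ∈ Finset.range k, max (C - (v : ℝ) * B) 0 := by
    rw [Finset.sum_sub_distrib, Finset.sum_const, Finset.card_range, nsmul_eq_mul]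
  have h1 : ∑ v ∈ Finset.range (m + 1), (C - (v : ℝ) * B)
      ≤ ∑ v ∈ Finset.range k, max (C - (v : ℝ) * B) 0 := by
    calc ∑ v ∈ Finset.range (m + 1), (C - (v : ℝ) * B)
        ≤ ∑ v ∈ Finset.range (m + 1), max (C - (v : ℝ) * B) 0 :=
          Finset.sum_le_sum fun i _ => le_max_left _ _
      _ ≤ ∑ v ∈ Finset.range k, max (C - (v : ℝ) * B) 0 :=
          Finset.sum_le_sum_of_subset_of_nonneg
            (Finset.range_subset_range.2 hmk) (fun i _ _ => le_max_right _ _)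
  have h2 : C ^ 2 / (2 * B) ≤ ∑ v ∈ Finset.range (m + 1), (C - (v : ℝ) * B) := by
    have hsum : ∑ v ∈ Finset.range (m + 1), (C - (v : ℝ) * B)
        = (m + 1) * C - B * (((m:ℝ) + 1) * m / 2) := by
      rw [Finset.sum_sub_distrib, Finset.sum_const, Finset.card_range, nsmul_eq_mul]
      have : ∑ x ∈ Finset.range (m+1), (x:ℝ) * B = (∑ x ∈ Finset.range (m+1), (x:ℝ)) * B := by
        rw [Finset.sum_mul]
      rw [this, gauss]
      push_cast; ring
    rw [hsum, div_le_iff₀ (by linarith)]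
    have key : 0 ≤ (C - (m:ℝ) * B) * (((m:ℝ) + 1) * B - C) :=
      mul_nonneg (by linarith) (by linarith)
    have hm0 : (0:ℝ) ≤ (m : ℝ) := Nat.cast_nonneg m
    nlinarith [mul_nonneg hB.le hC]
  linarith [step1, step2, h1, h2]

lemma analysis (k : ℕ) (ct : ℕ → ℝ) (hct0 : ∀ t, 0 ≤ ct t) (B C : ℝ)
    (hcap : ∀ t ∈ Finset.range k, ct t ≤ B)
    (hsum : ∑ t ∈ Finset.range k, ct t = C)
    (hB : 0 < B) (hCkB : C < k * B) :
    ∑ t ∈ Finset.range k, (t : ℝ) * ct t ≤ k * C - C ^ 2 / (2 * B) := by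
  have hCnn : (0:ℝ) ≤ C := hsum ▸ Finset.sum_nonneg fun t _ => hct0 t
  have e1 : ∀ t ∈ Finset.range k,
      (t:ℝ) * ct t = ∑ u ∈ Finset.range k, (if u < t then ct t else 0) := by
    intro t ht
    rw [Finset.sum_ite, Finset.sum_const_zero, add_zero, Finset.sum_const, nsmul_eq_mul]
    have hre : (Finset.range k).filter (fun u => u < t) = Finset.range t := by
      ext u
      simp only [Finset.mem_filter, Finset.mem_range]
      have := Finset.mem_range.1 ht
      omega
    rw [hre, Finset.card_range]
  rw [Finset.sum_congr rfl e1, Finset.sum_comm]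
  have e2 : ∀ u ∈ Finset.range k,
      (∑ t ∈ Finset.range k, (if u < t then ct t else 0))
      ≤ min C (((k - 1 - u : ℕ) : ℝ) * B) := by
    intro u hu
    rw [← Finset.sum_filter]
    apply le_min
    · calc ∑ t ∈ (Finset.range k).filter (fun t => u < t), ct t
          ≤ ∑ t ∈ Finset.range k, ct t :=
            Finset.sum_le_sum_of_subset_of_nonneg (Finset.filter_subset _ _)
              (fun t _ _ => hct0 t)
        _ = C := hsum
    · have hcard : ((Finset.range k).filter (fun t => u < t)).card = k - 1 - u := by
        have hre : (Finset.range k).filter (fun t => u < t) = Finset.Ico (u+1) k := by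
          ext t
          simp only [Finset.mem_filter, Finset.mem_range, Finset.mem_Ico]
          omega
        rw [hre, Nat.card_Ico]
        omega
      have hle := Finset.sum_le_card_nsmul ((Finset.range k).filter (fun t => u < t))
        ct B (fun t ht => hcap t (Finset.mem_filter.1 ht).1)
      rw [hcard, nsmul_eq_mul] at hle
      exact hle
  calc ∑ u ∈ Finset.range k, (∑ t ∈ Finset.range k, (if u < t then ct t else 0))
      ≤ ∑ u ∈ Finset.range k, min C (((k - 1 - u : ℕ) : ℝ) * B) := Finset.sum_le_sum e2
    _ = ∑ v ∈ Finset.range k, min C ((v:ℝ) * B) :=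
        Finset.sum_range_reflect (fun v => min C ((v:ℝ) * B)) k
    _ ≤ k * C - C^2/(2*B) := helper_sum_min k B C hB hCnn hCkB

set_option maxHeartbeats 1000000 in
open scoped Classical in
theorem stmt_2 (lam : ℕ → ℝ) (g : ℕ → ℝ) (hgdef : ∀ n, g n = lam (n + 1) - lam n)
    (hmono : ∀ n, 1 ≤ n → lam n < lam (n + 1))
    (havg : Tendsto (fun N : ℕ => (∑ n ∈ Finset.Icc 1 N, g n) / N) atTop (nhds 1))
    (hppc : ∀ I : Set ℝ, I.OrdConnected → Bornology.IsBounded I →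
      Tendsto (fun N : ℕ =>
          (((Finset.Icc 1 N ×ˢ Finset.Icc 1 N).filter
            (fun p => p.1 ≠ p.2 ∧ lam p.2 - lam p.1 ∈ I)).card : ℝ) / N)
        atTop (nhds (MeasureTheory.volume I).toReal))
    (ε : ℝ) (hε : ε = 1 / 10 ^ 9)
    (hgap : ∀ n, 1 ≤ n → g n ≤ 3 / 2 + ε) :
    ∀ᶠ N : ℕ in atTop,
      (∑ n ∈ Finset.Icc 1 N, ∑ m ∈ Finset.Icc 2 (N - n + 1),
          (if (∑ i ∈ Finset.Icc n (n + m - 1), g i) ∈ Set.Ioo (1 / 2 : ℝ) (3 / 2 + ε)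
            then (1 : ℝ) else 0)) / N
        ≤ 2 * Real.sqrt ε := by
  subst hε
  set δ : ℝ := (1 + 1/10^9) / 10^10 with hδdef
  have hδpos : (0:ℝ) < δ := by rw [hδdef]; norm_num
  -- volume helper
  have volIoc : ∀ a b : ℝ, a ≤ b → (MeasureTheory.volume (Set.Ioc a b)).toReal = b - a := by
    intro a b h
    rw [Real.volume_Ioc, ENNReal.toReal_ofReal (by linarith)]
  -- generic PPC eventual bound
  have ppcBound : ∀ (a b c : ℝ), a ≤ b → b - a < c →
      ∀ᶠ N : ℕ in atTop,
        (((Finset.Icc 1 (N+1) ×ˢ Finset.Icc 1 (N+1)).filter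
          (fun p => p.1 ≠ p.2 ∧ lam p.2 - lam p.1 ∈ Set.Ioc a b)).card : ℝ) ≤ c * (N+1) := by
    intro a b c hab hc
    have h := hppc (Set.Ioc a b) Set.ordConnected_Ioc (Metric.isBounded_Ioc a b)
    rw [volIoc a b hab] at h
    have h2 := (h.eventually_lt_const hc).and (eventually_ge_atTop 1)
    have h4 : ∀ᶠ M : ℕ in atTop,
        (((Finset.Icc 1 M ×ˢ Finset.Icc 1 M).filter
          (fun p => p.1 ≠ p.2 ∧ lam p.2 - lam p.1 ∈ Set.Ioc a b)).card : ℝ) ≤ c * M := by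
      refine h2.mono fun M hM => ?_
      have hM1 : (0:ℝ) < M := by exact_mod_cast hM.2
      have := (div_lt_iff₀ hM1).mp hM.1
      convert this.le using 3
      all_goals (ext p; simp only [Finset.mem_filter])

    have := (tendsto_add_atTop_nat 1).eventually h4
    exact_mod_cast this
  -- E1 : average gap
  have E1 : ∀ᶠ N : ℕ in atTop,
      (1 - 1/10^10 : ℝ) < (∑ n ∈ Finset.Icc 1 N, g n) / N :=
    havg.eventually_const_lt (by norm_num)
  -- E2 : main interval
  have E2 := ppcBound (1/2) (3/2 + 1/10^9) (1 + 1/10^9 + 1/10^7) (by norm_num) (by norm_num)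
  -- E3 : cells
  have E3 : ∀ᶠ N : ℕ in atTop, ∀ t ∈ Finset.range (10^10),
      (((Finset.Icc 1 (N+1) ×ˢ Finset.Icc 1 (N+1)).filter
        (fun p => p.1 ≠ p.2 ∧ lam p.2 - lam p.1 ∈
          Set.Ioc (1/2 + (t:ℝ)*δ) (1/2 + ((t:ℝ)+1)*δ))).card : ℝ)
        ≤ δ * (1 + 1/(4*10^9)) * N := by
    rw [eventually_all_finset]
    intro t _
    have hE := ppcBound (1/2 + (t:ℝ)*δ) (1/2 + ((t:ℝ)+1)*δ) (δ * (1 + 1/10^10))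
      (by nlinarith) (by nlinarith)
    filter_upwards [hE, eventually_ge_atTop (10^10 : ℕ)] with N hN hN10
    have hNR : (10^10 : ℝ) ≤ N := by exact_mod_cast hN10
    have : δ * (1 + 1/10^10) * (N+1) ≤ δ * (1 + 1/(4*10^9)) * N := by nlinarith
    linarith
  -- main part
  filter_upwards [E1, E2, E3, eventually_ge_atTop (10^10 : ℕ)] with N h1 h2 h3 hN10
  have hNR : (10^10 : ℝ) ≤ (N:ℝ) := by exact_mod_cast hN10
  have hN0 : (0:ℝ) < N := lt_of_lt_of_le (by norm_num) hNR
  set sm := (Finset.Icc 1 N).filter (fun i => g i ≤ 1/2) with hsm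
  set bg := (Finset.Icc 1 N).filter (fun i => ¬ g i ≤ 1/2) with hbg
  have hcards : sm.card + bg.card = N := by
    rw [hsm, hbg, Finset.card_filter_add_card_filter_not, Nat.card_Icc]
    omega
  have hkδ : ((10^10:ℕ):ℝ) * δ = 1 + 1/10^9 := by
    rw [hδdef]; push_cast; ring_nf
  -- ===== core bound on number of small gaps =====
  have hb : (sm.card : ℝ) ≤ (6/10^5) * N := by
    classical
    obtain ⟨k, hk10⟩ : ∃ k : ℕ, k = 10^10 := ⟨_, rfl⟩
    rw [← hk10] at h3
    have hk1 : 1 ≤ k := by rw [hk10]; norm_num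
    have hkR : (k:ℝ) * δ = 1 + 1/10^9 := by
      rw [show ((k:ℕ):ℝ) = ((10^10:ℕ):ℝ) from by rw [hk10]]
      exact hkδ
    set idx : ℕ → ℕ := fun i => ⌈(g i - 1/2)/δ⌉₊ - 1 with hidx
    have hmaps : ∀ i ∈ bg, idx i ∈ Finset.range k := by
      intro i hi
      obtain ⟨hiI, hgi⟩ := Finset.mem_filter.1 hi
      have h1i : 1 ≤ i := (Finset.mem_Icc.1 hiI).1
      have hup : g i - 1/2 ≤ (k:ℝ) * δ := by
        have := hgap i h1i
        rw [hkR]; linarith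
      have hceil : ⌈(g i - 1/2)/δ⌉₊ ≤ k := by
        apply Nat.ceil_le.2
        rw [div_le_iff₀ hδpos]
        exact hup
      simp only [Finset.mem_range, hidx]
      omega
    have hval : ∀ t : ℕ, ∀ i ∈ bg.filter (fun i => idx i = t),
        g i ∈ Set.Ioc (1/2 + (t:ℝ)*δ) (1/2 + ((t:ℝ)+1)*δ) := by
      intro t i hi
      obtain ⟨hibg, hit⟩ := Finset.mem_filter.1 hi
      obtain ⟨hiI, hgi⟩ := Finset.mem_filter.1 hibg
      push_neg at hgi
      have hxpos : 0 < (g i - 1/2)/δ := div_pos (by linarith) hδpos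
      have hcpos : 1 ≤ ⌈(g i - 1/2)/δ⌉₊ := Nat.ceil_pos.2 hxpos
      have ht1 : ⌈(g i - 1/2)/δ⌉₊ = t + 1 := by
        simp only [hidx] at hit; omega
      constructor
      · have hlt := Nat.ceil_lt_add_one hxpos.le
        rw [ht1] at hlt
        push_cast at hlt
        have ht' : (t:ℝ) < (g i - 1/2)/δ := by linarith
        have := (lt_div_iff₀ hδpos).1 ht'
        linarith
      · have hle := Nat.le_ceil ((g i - 1/2)/δ)
        rw [ht1] at hle
        push_cast at hle
        have := (div_le_iff₀ hδpos).1 hle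
        linarith
    obtain ⟨B, hBdef⟩ : ∃ B : ℝ, B = δ * (1 + 1/(4*10^9)) * N := ⟨_, rfl⟩
    have hcap : ∀ t ∈ Finset.range k,
        ((bg.filter (fun i => idx i = t)).card : ℝ) ≤ B := by
      intro t ht
      rw [hBdef]
      refine le_trans ?_ (h3 t ht)
      have hinj : (bg.filter (fun i => idx i = t)).card ≤
          ((Finset.Icc 1 (N+1) ×ˢ Finset.Icc 1 (N+1)).filter
            (fun p => p.1 ≠ p.2 ∧ lam p.2 - lam p.1 ∈
              Set.Ioc (1/2 + (t:ℝ)*δ) (1/2 + ((t:ℝ)+1)*δ))).card := by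
        apply Finset.card_le_card_of_injOn (fun i => (i, i+1))
        · intro i hi
          have hv := hval t i hi
          obtain ⟨hibg, _⟩ := Finset.mem_filter.1 hi
          obtain ⟨hiI, _⟩ := Finset.mem_filter.1 hibg
          obtain ⟨h1i, hiN⟩ := Finset.mem_Icc.1 hiI
          simp only [Finset.mem_coe, Finset.mem_filter, Finset.mem_product, Finset.mem_Icc]
          refine ⟨⟨⟨h1i, by omega⟩, by omega, by omega⟩, by omega, ?_⟩
          rw [← hgdef i]
          exact hv
        · intro i _ j _ h
          simpa using h
      exact_mod_cast hinj
    have hctsum : ∑ t ∈ Finset.range k, (bg.filter (fun i => idx i = t)).card = bg.card :=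
      (Finset.card_eq_sum_card_fiberwise hmaps).symm
    have hmass : (1 - 1/10^10 : ℝ) * N ≤ ∑ n ∈ Finset.Icc 1 N, g n := by
      have := (lt_div_iff₀ hN0).1 h1
      linarith
    have hsplit : ∑ n ∈ Finset.Icc 1 N, g n = ∑ i ∈ sm, g i + ∑ i ∈ bg, g i := by
      rw [hsm, hbg]
      exact (Finset.sum_filter_add_sum_filter_not _ _ _).symm
    have hsm2 : ∑ i ∈ sm, g i ≤ (sm.card : ℝ) * (1/2) := by
      have := Finset.sum_le_card_nsmul sm g (1/2) (fun i hi => (Finset.mem_filter.1 hi).2)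
      rwa [nsmul_eq_mul] at this
    have hbg2 : ∑ i ∈ bg, g i ≤
        ∑ t ∈ Finset.range k,
          ((bg.filter (fun i => idx i = t)).card : ℝ) * (1/2 + ((t:ℝ)+1)*δ) := by
      rw [← Finset.sum_fiberwise_of_maps_to hmaps g]
      refine Finset.sum_le_sum fun t _ => ?_
      have := Finset.sum_le_card_nsmul (bg.filter (fun i => idx i = t)) g (1/2 + ((t:ℝ)+1)*δ)
        (fun i hi => (hval t i hi).2)
      rwa [nsmul_eq_mul] at this
    obtain ⟨C, hCdef⟩ : ∃ C : ℝ, C = (bg.card : ℝ) := ⟨_, rfl⟩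
    have hBpos : 0 < B := by
      rw [hBdef]
      exact mul_pos (mul_pos hδpos (by norm_num)) hN0
    have hCnn : (0:ℝ) ≤ C := by rw [hCdef]; exact Nat.cast_nonneg _
    have hCN : C ≤ N := by
      rw [hCdef]
      have : bg.card ≤ N := by
        calc bg.card ≤ (Finset.Icc 1 N).card := Finset.card_filter_le _ _
          _ = N := by rw [Nat.card_Icc]; omega
      exact_mod_cast this
    have hkB : (k:ℝ) * B = (1 + 1/10^9) * (1 + 1/(4*10^9)) * N := by
      rw [hBdef, show (k:ℝ) * (δ * (1 + 1/(4*10^9)) * N)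
        = ((k:ℝ) * δ) * ((1 + 1/(4*10^9)) * N) from by ring, hkR]
      ring
    have hCkB : C < (k:ℕ) * B := by
      rw [hkB]
      nlinarith [hCN, hN0]
    have hctC : ∑ t ∈ Finset.range k, ((bg.filter (fun i => idx i = t)).card : ℝ) = C := by
      rw [hCdef, ← hctsum]
      push_cast
      rfl
    have hswap := analysis k (fun t => ((bg.filter (fun i => idx i = t)).card : ℝ))
      (fun t => Nat.cast_nonneg _) B C hcap hctC hBpos hCkB
    have hexp : ∑ t ∈ Finset.range k,
        ((bg.filter (fun i => idx i = t)).card : ℝ) * (1/2 + ((t:ℝ)+1)*δ)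
        = (1/2 + δ) * C
          + δ * ∑ t ∈ Finset.range k,
              (t:ℝ) * ((bg.filter (fun i => idx i = t)).card : ℝ) := by
      have e3 : ∀ t ∈ Finset.range k,
          ((bg.filter (fun i => idx i = t)).card : ℝ) * (1/2 + ((t:ℝ)+1)*δ)
          = ((bg.filter (fun i => idx i = t)).card : ℝ) * (1/2 + δ)
            + δ * ((t:ℝ) * ((bg.filter (fun i => idx i = t)).card : ℝ)) := fun t _ => by ring
      rw [Finset.sum_congr rfl e3, Finset.sum_add_distrib, ← Finset.sum_mul, ← Finset.mul_sum,
        hctC]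
      ring
    have hmaster : (1 - 1/10^10 : ℝ) * N
        ≤ (sm.card:ℝ)/2 + (1/2 + δ) * C + δ * ((k:ℕ) * C - C^2/(2*B)) := by
      have hd := mul_le_mul_of_nonneg_left hswap hδpos.le
      calc (1 - 1/10^10 : ℝ) * N ≤ ∑ n ∈ Finset.Icc 1 N, g n := hmass
        _ = ∑ i ∈ sm, g i + ∑ i ∈ bg, g i := hsplit
        _ ≤ (sm.card : ℝ) * (1/2) + ∑ t ∈ Finset.range k,
              ((bg.filter (fun i => idx i = t)).card : ℝ) * (1/2 + ((t:ℝ)+1)*δ) := by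
            linarith [hsm2, hbg2]
        _ = (sm.card : ℝ)/2 + ((1/2 + δ) * C
              + δ * ∑ t ∈ Finset.range k,
                  (t:ℝ) * ((bg.filter (fun i => idx i = t)).card : ℝ)) := by
            rw [hexp]; ring
        _ ≤ _ := by linarith
    have hterm : δ * ((k:ℕ) * C - C^2/(2*B))
        = (1 + 1/10^9) * C - C^2/(2*(1 + 1/(4*10^9))*N) := by
      rw [show δ * ((k:ℕ) * C - C^2/(2*B)) = ((k:ℝ) * δ) * C - δ * (C^2/(2*B)) from by ring,
        hkR]
      congr 1
      rw [hBdef, eq_div_iff (by positivity)]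
      field_simp
    rw [hterm] at hmaster
    have hCval : C = (N:ℝ) - sm.card := by
      rw [hCdef]
      have : ((sm.card + bg.card : ℕ) : ℝ) = (N:ℝ) := by
        exact_mod_cast congrArg (Nat.cast : ℕ → ℝ) hcards
      push_cast at this
      linarith
    have hδub : δ ≤ 2/10^10 := by rw [hδdef]; norm_num
    have hsmnn : (0:ℝ) ≤ (sm.card : ℝ) := Nat.cast_nonneg _
    have hquad : C^2 ≤ (2*(1 + 1/(4*10^9))*N) *
        ((sm.card:ℝ)/2 + (1/2 + δ) * C + (1 + 1/10^9) * C - (1 - 1/10^10) * N) := by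
      have h2N : (0:ℝ) < 2*(1 + 1/(4*10^9))*N := by positivity
      have := (div_le_iff₀ h2N).1 (by linarith : C^2/(2*(1 + 1/(4*10^9))*N)
        ≤ (sm.card:ℝ)/2 + (1/2 + δ) * C + (1 + 1/10^9) * C - (1 - 1/10^10) * N)
      linarith
    rw [hCval] at hquad
    have hsmN : (sm.card:ℝ) ≤ N := by
      rw [hCval] at hCnn; linarith
    nlinarith [hquad, hsmnn, hNR, hN0, hδub, hδpos, hsmN,
      mul_le_mul_of_nonneg_right hδub (sub_nonneg.2 hsmN),
      mul_nonneg hsmnn hN0.le]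
  have hcount : (∑ n ∈ Finset.Icc 1 N, ∑ m ∈ Finset.Icc 2 (N - n + 1),
      (if (∑ i ∈ Finset.Icc n (n + m - 1), g i) ∈ Set.Ioo (1/2 : ℝ) (3/2 + 1/10^9)
        then (1:ℝ) else 0)) + (bg.card : ℝ)
      ≤ (((Finset.Icc 1 (N+1) ×ˢ Finset.Icc 1 (N+1)).filter
          (fun p => p.1 ≠ p.2 ∧ lam p.2 - lam p.1 ∈ Set.Ioc (1/2:ℝ) (3/2 + 1/10^9))).card : ℝ) := by
    classical
    set S := ((Finset.Icc 1 N).sigma (fun n => (Finset.Icc 2 (N - n + 1)).filter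
        (fun m => lam (n + m) - lam n ∈ Set.Ioo (1/2 : ℝ) (3/2 + 1/10^9)))) with hSdef
    have hsum_eq : (∑ n ∈ Finset.Icc 1 N, ∑ m ∈ Finset.Icc 2 (N - n + 1),
        (if (∑ i ∈ Finset.Icc n (n + m - 1), g i) ∈ Set.Ioo (1/2 : ℝ) (3/2 + 1/10^9)
          then (1:ℝ) else 0)) = (S.card : ℝ) := by
      rw [hSdef, Finset.card_sigma, Nat.cast_sum]
      refine Finset.sum_congr rfl fun n hn => ?_
      calc ∑ m ∈ Finset.Icc 2 (N - n + 1),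
            (if (∑ i ∈ Finset.Icc n (n + m - 1), g i) ∈ Set.Ioo (1/2 : ℝ) (3/2 + 1/10^9)
              then (1:ℝ) else 0)
          = ∑ m ∈ Finset.Icc 2 (N - n + 1),
            (if lam (n + m) - lam n ∈ Set.Ioo (1/2 : ℝ) (3/2 + 1/10^9) then (1:ℝ) else 0) := by
            refine Finset.sum_congr rfl fun m hm => ?_
            have hm2 : 2 ≤ m := (Finset.mem_Icc.1 hm).1
            have hIccIco : Finset.Icc n (n + m - 1) = Finset.Ico n (n + m) := by
              ext i; simp only [Finset.mem_Icc, Finset.mem_Ico]; omega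
            have htel : (∑ i ∈ Finset.Icc n (n + m - 1), g i) = lam (n + m) - lam n := by
              rw [hIccIco]
              rw [show (∑ i ∈ Finset.Ico n (n+m), g i)
                  = ∑ i ∈ Finset.Ico n (n+m), (lam (i+1) - lam i) from
                Finset.sum_congr rfl fun i _ => hgdef i]
              exact tele lam n (n+m) (by omega)
            rw [htel]
        _ = _ := by rw [Finset.sum_boole]
    rw [hsum_eq]
    have hcardle : S.card + bg.card ≤
        (((Finset.Icc 1 (N+1) ×ˢ Finset.Icc 1 (N+1)).filter
          (fun p => p.1 ≠ p.2 ∧ lam p.2 - lam p.1 ∈ Set.Ioc (1/2:ℝ) (3/2 + 1/10^9))).card) := by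
      have hU1 : (S.image (fun p => (p.1, p.1 + p.2))).card = S.card := by
        apply Finset.card_image_of_injOn
        rintro ⟨n1, m1⟩ _ ⟨n2, m2⟩ _ hpq
        simp only [Prod.mk.injEq] at hpq
        obtain ⟨ha, hb'⟩ := hpq
        subst ha
        have : m1 = m2 := by omega
        subst this; rfl
      have hU2 : (bg.image (fun i => (i, i+1))).card = bg.card := by
        apply Finset.card_image_of_injOn
        intro i _ j _ h
        simpa using h
      have hdisj : Disjoint (S.image (fun p => (p.1, p.1 + p.2))) (bg.image (fun i => (i, i+1))) := by
        rw [Finset.disjoint_left]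
        rintro ⟨x, y⟩ hx hy
        simp only [Finset.mem_image] at hx hy
        obtain ⟨p, hmem, heq⟩ := hx
        obtain ⟨i, hi, heq2⟩ := hy
        obtain ⟨n, m⟩ := p
        have hm2 : 2 ≤ m := by
          have h' : m ∈ (Finset.Icc 2 (N - n + 1)).filter
              (fun m => lam (n + m) - lam n ∈ Set.Ioo (1/2 : ℝ) (3/2 + 1/10^9)) :=
            (Finset.mem_sigma.1 hmem).2
          exact (Finset.mem_Icc.1 (Finset.mem_filter.1 h').1).1
        have heq' : (n, n + m) = (x, y) := heq
        have heq2' : (i, i + 1) = (x, y) := heq2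
        simp only [Prod.mk.injEq] at heq' heq2'
        omega
      have hsub : (S.image (fun p => (p.1, p.1 + p.2))) ∪ (bg.image (fun i => (i, i+1))) ⊆
          ((Finset.Icc 1 (N+1) ×ˢ Finset.Icc 1 (N+1)).filter
            (fun p => p.1 ≠ p.2 ∧ lam p.2 - lam p.1 ∈ Set.Ioc (1/2:ℝ) (3/2 + 1/10^9))) := by
        intro q hq
        rcases Finset.mem_union.1 hq with hq | hq
        · obtain ⟨p, hmem, heq⟩ := Finset.mem_image.1 hq
          obtain ⟨n, m⟩ := p
          have hn : n ∈ Finset.Icc 1 N := (Finset.mem_sigma.1 hmem).1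
          have hm : m ∈ (Finset.Icc 2 (N - n + 1)).filter
              (fun m => lam (n + m) - lam n ∈ Set.Ioo (1/2 : ℝ) (3/2 + 1/10^9)) :=
            (Finset.mem_sigma.1 hmem).2
          obtain ⟨hmIcc, hmIo⟩ := Finset.mem_filter.1 hm
          obtain ⟨hn1, hnN⟩ := Finset.mem_Icc.1 hn
          obtain ⟨hm2, hmub⟩ := Finset.mem_Icc.1 hmIcc
          obtain rfl : (n, n + m) = q := heq
          simp only [Finset.mem_filter, Finset.mem_product, Finset.mem_Icc]
          exact ⟨⟨⟨hn1, by omega⟩, by omega, by omega⟩, by omega,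
            ⟨hmIo.1, hmIo.2.le⟩⟩
        · obtain ⟨i, hi, heq⟩ := Finset.mem_image.1 hq
          obtain ⟨hiI, hgi⟩ := Finset.mem_filter.1 hi
          obtain ⟨h1i, hiN⟩ := Finset.mem_Icc.1 hiI
          push_neg at hgi
          subst heq
          simp only [Finset.mem_filter, Finset.mem_product, Finset.mem_Icc]
          refine ⟨⟨⟨h1i, by omega⟩, by omega, by omega⟩, by omega, ?_⟩
          rw [← hgdef i]
          exact ⟨hgi, hgap i h1i⟩
      calc S.card + bg.card
          = (S.image (fun p => (p.1, p.1 + p.2))).card + (bg.image (fun i => (i, i+1))).card := by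
            rw [hU1, hU2]
        _ = ((S.image (fun p => (p.1, p.1 + p.2))) ∪ (bg.image (fun i => (i, i+1)))).card :=
            (Finset.card_union_of_disjoint hdisj).symm
        _ ≤ _ := Finset.card_le_card hsub
    exact_mod_cast hcardle
  -- ===== final assembly =====
  have hbgR : (bg.card : ℝ) = (N:ℝ) - sm.card := by
    have : ((sm.card + bg.card : ℕ) : ℝ) = (N:ℝ) := by exact_mod_cast congrArg (Nat.cast : ℕ → ℝ) hcards
    push_cast at this; linarith
  have hsqrt : (61/10^6 : ℝ) ≤ 2 * Real.sqrt (1/10^9) := by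
    have h30 : (305/10^7 : ℝ) ≤ Real.sqrt (1/10^9) :=
      (Real.le_sqrt (by norm_num) (by norm_num)).2 (by norm_num)
    linarith
  rw [div_le_iff₀ hN0]
  have hS : (∑ n ∈ Finset.Icc 1 N, ∑ m ∈ Finset.Icc 2 (N - n + 1),
      (if (∑ i ∈ Finset.Icc n (n + m - 1), g i) ∈ Set.Ioo (1/2 : ℝ) (3/2 + 1/10^9)
        then (1:ℝ) else 0)) ≤ (61/10^6) * N := by
    have hT := h2
    push_cast at hT
    nlinarith [hcount, hb, hbgR, hNR]
  calc (∑ n ∈ Finset.Icc 1 N, ∑ m ∈ Finset.Icc 2 (N - n + 1),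
      (if (∑ i ∈ Finset.Icc n (n + m - 1), g i) ∈ Set.Ioo (1/2 : ℝ) (3/2 + 1/10^9)
        then (1:ℝ) else 0)) ≤ (61/10^6) * N := hS
    _ ≤ 2 * Real.sqrt (1/10^9) * N := by nlinarith [hsqrt, hN0]
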